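/- Let Y₁, Y₂, …, Y_N be independent, identically distributed real random variables with E[Y_j] = K > 0 and |Y_j| ≤ A almost surely for a constant A > 0, and let S_k = Σ_{j=1}^{k} Y_j. Let α > 0 be such that exp(−α·K²/(2A²)) < 1/4 and α ≤ N. Then the probability that some partial sum of length at least α is nonpositive is exponentially small: P( ∃ k ∈ {⌈α⌉, …, N} with S_k ≤ 0 ) ≤ (16/3)·exp(−α·K²/(2A²)). -/

import Mathlib

open MeasureTheory ProbabilityTheory

lemma aux_cosh_bound (u : ℝ) (hu : 0 ≤ u) :
    Real.cosh u - u * Real.sinh u ≤ Real.exp (-(u ^ 2) / 2) := by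
  have key : ∀ x : ℝ, HasDerivAt (fun t => Real.exp (-(t ^ 2) / 2) - Real.cosh t + t * Real.sinh t)
      (x * (Real.cosh x - Real.exp (-(x ^ 2) / 2))) x := by
    intro x
    have h1 : HasDerivAt (fun t : ℝ => -(t ^ 2) / 2) (-x) x := by
      have h : HasDerivAt (fun t : ℝ => -(t ^ 2) / 2) (-((2:ℕ) * x ^ (2 - 1)) / 2) x :=
        ((hasDerivAt_pow 2 x).neg).div_const 2
      convert h using 1
      simp
      ring
    have h2 : HasDerivAt (fun t : ℝ => Real.exp (-(t ^ 2) / 2)) (Real.exp (-(x ^ 2) / 2) * (-x)) x :=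
      (Real.hasDerivAt_exp _).comp x h1
    have h3 := Real.hasDerivAt_cosh x
    have h4 : HasDerivAt (fun t : ℝ => t * Real.sinh t) (Real.sinh x + x * Real.cosh x) x := by
      have h : HasDerivAt (fun t : ℝ => t * Real.sinh t) (1 * Real.sinh x + x * Real.cosh x) x :=
        (hasDerivAt_id x).mul (Real.hasDerivAt_sinh x)
      simpa using h
    have h5 : HasDerivAt (fun t => Real.exp (-(t ^ 2) / 2) - Real.cosh t + t * Real.sinh t)
        (Real.exp (-(x ^ 2) / 2) * (-x) - Real.sinh x + (Real.sinh x + x * Real.cosh x)) x :=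
      (h2.sub h3).add h4
    convert h5 using 1
    ring
  have hmono : MonotoneOn (fun t => Real.exp (-(t ^ 2) / 2) - Real.cosh t + t * Real.sinh t)
      (Set.Ici (0 : ℝ)) := by
    apply monotoneOn_of_deriv_nonneg (convex_Ici 0)
    · exact Continuous.continuousOn (by continuity)
    · intro x hx
      exact (key x).differentiableAt.differentiableWithinAt
    · intro x hx
      rw [(key x).deriv]
      have hx0 : 0 < x := by simpa using hx
      have he : Real.exp (-(x ^ 2) / 2) ≤ 1 := by
        rw [← Real.exp_zero]; apply Real.exp_le_exp.2; nlinarith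
      have hc : Real.exp (-(x ^ 2) / 2) ≤ Real.cosh x := le_trans he (Real.one_le_cosh x)
      nlinarith
  have h0 := hmono Set.self_mem_Ici (Set.mem_Ici.2 hu) hu
  have h00 : Real.exp (-(0:ℝ) ^ 2 / 2) = 1 := by norm_num
  simp only [Real.cosh_zero, Real.sinh_zero, mul_zero, add_zero, h00] at h0
  linarith

lemma aux_chord (lam A x : ℝ) (hA : 0 < A) (hx : |x| ≤ A) :
    Real.exp (-lam * x) ≤ ((A - x) / (2 * A)) * Real.exp (lam * A)
      + ((A + x) / (2 * A)) * Real.exp (-(lam * A)) := by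
  obtain ⟨hx1, hx2⟩ := abs_le.1 hx
  have hw1 : (0:ℝ) ≤ (A - x) / (2 * A) := by
    apply div_nonneg (by linarith) (by linarith)
  have hw2 : (0:ℝ) ≤ (A + x) / (2 * A) := by
    apply div_nonneg (by linarith) (by linarith)
  have hsum : (A - x) / (2 * A) + (A + x) / (2 * A) = 1 := by
    field_simp; ring
  have hcvx := convexOn_exp.2 (Set.mem_univ (lam * A)) (Set.mem_univ (-(lam * A))) hw1 hw2 hsum
  simp only [smul_eq_mul] at hcvx
  calc Real.exp (-lam * x)
      = Real.exp ((A - x) / (2 * A) * (lam * A) + (A + x) / (2 * A) * (-(lam * A))) := by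
        congr 1; field_simp; ring
    _ ≤ _ := hcvx

set_option maxHeartbeats 1000000 in
theorem stmt10 {Θ : Type*} [MeasurableSpace Θ] (Pr : Measure Θ) [IsProbabilityMeasure Pr]
    (N : ℕ) (hN : 1 ≤ N) (Y : ℕ → Θ → ℝ) (hmeas : ∀ j, Measurable (Y j))
    (hInd : @iIndepFun _ _ _ _ (fun _ : {k : ℕ // 1 ≤ k ∧ k ≤ N} => (inferInstance : MeasurableSpace ℝ))
      (fun k : {k : ℕ // 1 ≤ k ∧ k ≤ N} => Y k.1) Pr)
    (hid : ∀ i ∈ Finset.Icc 1 N, ∀ j ∈ Finset.Icc 1 N, IdentDistrib (Y i) (Y j) Pr Pr)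
    (K : ℝ) (hK : 0 < K) (hmean : ∀ j ∈ Finset.Icc 1 N, (∫ θ, Y j θ ∂Pr) = K)
    (A : ℝ) (hA : 0 < A) (hbound : ∀ j ∈ Finset.Icc 1 N, ∀ᵐ θ ∂Pr, |Y j θ| ≤ A)
    (S : ℕ → Θ → ℝ) (hS : ∀ k θ, S k θ = ∑ j ∈ Finset.Icc 1 k, Y j θ)
    (α : ℝ) (hα : 0 < α) (hαN : α ≤ (N : ℝ))
    (hsmall : Real.exp (-α * K ^ 2 / (2 * A ^ 2)) < 1 / 4) :
    Pr {θ | ∃ k, ⌈α⌉₊ ≤ k ∧ k ≤ N ∧ S k θ ≤ 0}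
      ≤ ENNReal.ofReal ((16 / 3) * Real.exp (-α * K ^ 2 / (2 * A ^ 2))) := by
  classical
  letI : Fintype {k : ℕ // 1 ≤ k ∧ k ≤ N} :=
    Fintype.subtype (Finset.Icc 1 N) (fun x => by simp [Finset.mem_Icc])
  set lam : ℝ := K / A ^ 2 with hlam_def
  have hlam_pos : 0 < lam := by positivity
  set c : ℝ := K ^ 2 / (2 * A ^ 2) with hc_def
  have hc_pos : 0 < c := by positivity
  set r : ℝ := Real.exp (-c) with hr_def
  have hr_pos : 0 < r := Real.exp_pos _
  have hr_le_one : r ≤ 1 := Real.exp_le_one_iff.2 (by linarith)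
  set a : ℕ := ⌈α⌉₊ with ha_def
  have ha1 : 1 ≤ a := Nat.one_le_ceil_iff.2 hα
  have haN : a ≤ N := Nat.ceil_le.2 hαN
  have hαa : α ≤ (a : ℝ) := Nat.le_ceil α
  set g : ℝ → ℝ := fun x => Real.exp (-lam * x) with hg_def
  have hg_meas : Measurable g := Real.measurable_exp.comp (measurable_id.const_mul _)
  have hg_pos : ∀ x, 0 < g x := fun x => by rw [hg_def]; exact Real.exp_pos _
  clear_value g
  set ρ : ℕ → ℝ := fun j => ∫ θ, g (Y j θ) ∂Pr with hρ_def
  -- measurability of partial sums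
  have hSmeas : ∀ j, Measurable (S j) := by
    intro j
    have : S j = fun θ => ∑ m ∈ Finset.Icc 1 j, Y m θ := funext (hS j)
    rw [this]
    exact Finset.measurable_sum _ fun m _ => hmeas m
  -- generic integrability from bounds
  have hint : ∀ (f : Θ → ℝ) (C : ℝ), Measurable f → (∀ᵐ θ ∂Pr, |f θ| ≤ C) →
      Integrable f Pr := by
    intro f C hf h
    exact Integrable.mono' (integrable_const C) hf.aestronglyMeasurable
      (h.mono fun θ hθ => by simpa [Real.norm_eq_abs] using hθ)
  -- a.e. bounds
  have hae : ∀ᵐ θ ∂Pr, ∀ j ∈ Finset.Icc 1 N, |Y j θ| ≤ A :=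
    (ae_ball_iff (Finset.countable_toSet _)).2 hbound
  have hSb : ∀ᵐ θ ∂Pr, ∀ j, j ≤ N → |S j θ| ≤ (N : ℝ) * A := by
    filter_upwards [hae] with θ hθ j hj
    rw [hS j θ]
    calc |∑ m ∈ Finset.Icc 1 j, Y m θ| ≤ ∑ m ∈ Finset.Icc 1 j, |Y m θ| :=
          Finset.abs_sum_le_sum_abs _ _
      _ ≤ ∑ m ∈ Finset.Icc 1 j, A := by
          apply Finset.sum_le_sum
          intro m hm
          have hm' : m ∈ Finset.Icc 1 N := by
            simp only [Finset.mem_Icc] at hm ⊢; omega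
          exact hθ m hm'
      _ = (j : ℝ) * A := by
          rw [Finset.sum_const, Nat.card_Icc]
          simp [nsmul_eq_mul]
      _ ≤ (N : ℝ) * A := by
          apply mul_le_mul_of_nonneg_right _ hA.le
          exact_mod_cast hj
  set M : ℝ := Real.exp (lam * ((N : ℝ) * A)) with hM_def
  have hgS_bd : ∀ᵐ θ ∂Pr, ∀ j, j ≤ N → |g (S j θ)| ≤ M := by
    filter_upwards [hSb] with θ hθ j hj
    rw [abs_of_pos (hg_pos _), hg_def, hM_def]
    apply Real.exp_le_exp.2
    have h1 := hθ j hj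
    have h2 := abs_le.1 h1
    nlinarith [hlam_pos.le]
  have hgY_bd : ∀ j ∈ Finset.Icc 1 N, ∀ᵐ θ ∂Pr, |g (Y j θ)| ≤ Real.exp (lam * A) := by
    intro j hj
    filter_upwards [hbound j hj] with θ hθ
    rw [abs_of_pos (hg_pos _), hg_def]
    apply Real.exp_le_exp.2
    have h2 := abs_le.1 hθ
    nlinarith [hlam_pos.le]
  have hgYint : ∀ j ∈ Finset.Icc 1 N, Integrable (fun θ => g (Y j θ)) Pr :=
    fun j hj => hint _ _ (hg_meas.comp (hmeas j)) (hgY_bd j hj)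
  -- ρ bounds
  have hρ_pos : ∀ j ∈ Finset.Icc 1 N, 0 < ρ j := by
    intro j hj
    have hle : (fun _ : Θ => Real.exp (-(lam * A))) ≤ᵐ[Pr] fun θ => g (Y j θ) := by
      filter_upwards [hbound j hj] with θ hθ
      rw [hg_def]
      apply Real.exp_le_exp.2
      have h2 := abs_le.1 hθ
      nlinarith [hlam_pos.le]
    have := integral_mono_ae (integrable_const _) (hgYint j hj) hle
    simp only [integral_const, probReal_univ, measure_univ, ENNReal.toReal_one, smul_eq_mul, one_mul] at this
    exact lt_of_lt_of_le (Real.exp_pos _) this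
  have hρ_le : ∀ j ∈ Finset.Icc 1 N, ρ j ≤ r := by
    intro j hj
    have hYint : Integrable (Y j) Pr := hint _ A (hmeas j) (hbound j hj)
    set u : ℝ := K / A with hu_def
    have huA : lam * A = u := by
      rw [hlam_def, hu_def]
      field_simp
    set c1 : ℝ := (Real.exp u + Real.exp (-u)) / 2 with hc1_def
    set c2 : ℝ := (Real.exp (-u) - Real.exp u) / (2 * A) with hc2_def
    have step1 : ρ j ≤ ∫ θ, (c1 + c2 * Y j θ) ∂Pr := by
      apply integral_mono_ae (hgYint j hj)
      · exact (integrable_const c1).add (hYint.const_mul c2)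
      · filter_upwards [hbound j hj] with θ hθ
        have hch := aux_chord lam A (Y j θ) hA hθ
        rw [huA] at hch
        rw [hg_def]
        calc Real.exp (-lam * Y j θ) ≤ ((A - Y j θ) / (2 * A)) * Real.exp u
              + ((A + Y j θ) / (2 * A)) * Real.exp (-u) := hch
          _ = c1 + c2 * Y j θ := by
              rw [hc1_def, hc2_def]
              field_simp
              ring
    have step2 : ∫ θ, (c1 + c2 * Y j θ) ∂Pr = c1 + c2 * K := by
      rw [integral_add (integrable_const c1) (hYint.const_mul c2),
        MeasureTheory.integral_const_mul, hmean j hj]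
      simp
    have hu_pos : 0 ≤ u := by positivity
    have step3 : c1 + c2 * K = Real.cosh u - u * Real.sinh u := by
      rw [Real.cosh_eq, Real.sinh_eq, hc1_def, hc2_def, hu_def]
      field_simp
      ring
    have step4 := aux_cosh_bound u hu_pos
    have step5 : Real.exp (-(u ^ 2) / 2) = r := by
      rw [hr_def, hc_def, hu_def]
      congr 1
      field_simp
    calc ρ j ≤ c1 + c2 * K := by rw [← step2]; exact step1
      _ = Real.cosh u - u * Real.sinh u := step3
      _ ≤ Real.exp (-(u ^ 2) / 2) := step4
      _ = r := step5
  -- independence helper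
  have hindep : ∀ (SS TT : Finset {k : ℕ // 1 ≤ k ∧ k ≤ N}), Disjoint SS TT →
      ∀ (b : ({x // x ∈ SS} → ℝ) → ℝ) (p : ({x // x ∈ TT} → ℝ) → ℝ),
      Measurable b → Measurable p →
      IndepFun (fun θ => b (fun i => Y i.1.1 θ)) (fun θ => p (fun i => Y i.1.1 θ)) Pr := by
    intro SS TT hST b p hb hp
    exact (hInd.indepFun_finset SS TT hST fun i => hmeas i.1).comp hb hp
  -- product formula
  have hprod : ∀ TT : Finset {k : ℕ // 1 ≤ k ∧ k ≤ N},
      ∫ θ, (∏ i ∈ TT, g (Y i.1 θ)) ∂Pr = ∏ i ∈ TT, ρ i.1 := by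
    intro TT
    induction TT using Finset.induction_on with
    | empty => simp
    | @insert i t hit ih =>
      have hb : Measurable (fun v : ({x // x ∈ ({i} : Finset {k : ℕ // 1 ≤ k ∧ k ≤ N})} → ℝ) =>
          g (v ⟨i, Finset.mem_singleton_self i⟩)) :=
        hg_meas.comp (measurable_pi_apply _)
      have hp : Measurable (fun v : ({x // x ∈ t} → ℝ) => ∏ x : {y // y ∈ t}, g (v x)) :=
        Finset.measurable_prod _ (fun x _ => hg_meas.comp (measurable_pi_apply x))
      have hIF := hindep {i} t (Finset.disjoint_singleton_left.2 hit) _ _ hb hp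
      have heqR : (fun θ => ∏ x : {y // y ∈ t}, g (Y x.1.1 θ))
          = fun θ => ∏ x ∈ t, g (Y x.1 θ) := by
        funext θ
        exact Finset.prod_coe_sort t (fun x => g (Y x.1 θ))
      rw [heqR] at hIF
      have hmul := hIF.integral_fun_mul_eq_mul_integral (hg_meas.comp (hmeas i.1)).aestronglyMeasurable
        ((Finset.measurable_prod t (fun x _ => hg_meas.comp (hmeas x.1))).aestronglyMeasurable)
      calc ∫ θ, ∏ x ∈ insert i t, g (Y x.1 θ) ∂Pr
          = ∫ θ, g (Y i.1 θ) * ∏ x ∈ t, g (Y x.1 θ) ∂Pr := by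
            congr 1; funext θ; rw [Finset.prod_insert hit]
        _ = (∫ θ, g (Y i.1 θ) ∂Pr) * ∫ θ, ∏ x ∈ t, g (Y x.1 θ) ∂Pr := hmul
        _ = ρ i.1 * ∏ x ∈ t, ρ x.1 := by rw [ih]
        _ = ∏ x ∈ insert i t, ρ x.1 := by rw [Finset.prod_insert hit]
  -- reindexing
  have himg : ∀ (q : ℕ → Prop) [DecidablePred q],
      ((Finset.univ.filter (fun i : {k : ℕ // 1 ≤ k ∧ k ≤ N} => q i.1)).image
        (fun i => i.1)) = (Finset.Icc 1 N).filter q := by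
    intro q _
    ext m
    simp only [Finset.mem_image, Finset.mem_filter, Finset.mem_univ, true_and, Finset.mem_Icc]
    constructor
    · rintro ⟨⟨i, hi1, hi2⟩, hq, rfl⟩
      exact ⟨⟨hi1, hi2⟩, hq⟩
    · rintro ⟨⟨h1, h2⟩, hq⟩
      exact ⟨⟨m, h1, h2⟩, hq, rfl⟩
  have hreidx : ∀ (q : ℕ → Prop) [DecidablePred q] (F : ℕ → ℝ),
      ∏ i ∈ Finset.univ.filter (fun i : {k : ℕ // 1 ≤ k ∧ k ≤ N} => q i.1), F i.1
        = ∏ m ∈ (Finset.Icc 1 N).filter q, F m := by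
    intro q _ F
    rw [← himg q, Finset.prod_image]
    intro x _ y _ h
    exact Subtype.ext h
    -- the first-entry events
  set E : ℕ → Set Θ := fun k =>
    {θ | S k θ ≤ 0} ∩ ⋂ j ∈ Finset.Ico a k, {θ | 0 < S j θ} with hE_def
  have hEmem : ∀ k θ, θ ∈ E k ↔ (S k θ ≤ 0 ∧ ∀ j ∈ Finset.Ico a k, 0 < S j θ) := by
    intro k θ
    simp only [hE_def, Set.mem_inter_iff, Set.mem_setOf_eq, Set.mem_iInter]
  have hEmeas : ∀ k, MeasurableSet (E k) := by
    intro k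
    rw [hE_def]
    exact (measurableSet_le (hSmeas k) measurable_const).inter
      (MeasurableSet.biInter (Set.to_countable _)
        (fun j _ => measurableSet_lt measurable_const (hSmeas j)))
  have hEdisj : ∀ θ, ∀ k ∈ Finset.Icc a N, ∀ k' ∈ Finset.Icc a N, k ≠ k' →
      θ ∈ E k → θ ∉ E k' := by
    intro θ k hk k' hk' hne hEk hEk'
    rw [hEmem] at hEk hEk'
    simp only [Finset.mem_Icc] at hk hk'
    rcases lt_or_gt_of_ne hne with h | h
    · exact absurd hEk.1 (not_le.2 (hEk'.2 k (Finset.mem_Ico.2 ⟨hk.1, h⟩)))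
    · exact absurd hEk'.1 (not_le.2 (hEk.2 k' (Finset.mem_Ico.2 ⟨hk'.1, h⟩)))
  have hset : {θ | ∃ k, a ≤ k ∧ k ≤ N ∧ S k θ ≤ 0} = ⋃ k ∈ Finset.Icc a N, E k := by
    ext θ
    simp only [Set.mem_setOf_eq, Set.mem_iUnion, Finset.mem_Icc, exists_prop]
    constructor
    · intro hex
      have hk0 := Nat.find_spec hex
      refine ⟨Nat.find hex, ⟨hk0.1, hk0.2.1⟩, ?_⟩
      rw [hEmem]
      refine ⟨hk0.2.2, ?_⟩
      intro j hj
      rw [Finset.mem_Ico] at hj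
      by_contra hle
      push_neg at hle
      exact Nat.find_min hex hj.2 ⟨hj.1, le_trans (le_of_lt hj.2) hk0.2.1, hle⟩
    · rintro ⟨k, ⟨h1, h2⟩, hEk⟩
      rw [hEmem] at hEk
      exact ⟨k, h1, h2, hEk.1⟩
  -- global product
  set P : ℝ := ∏ m ∈ Finset.Icc 1 N, ρ m with hP_def
  have hP_pos : 0 < P := Finset.prod_pos (fun m hm => hρ_pos m hm)
  have hreuniv : ∀ F : ℕ → ℝ,
      ∏ i ∈ (Finset.univ : Finset {k : ℕ // 1 ≤ k ∧ k ≤ N}), F i.1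
        = ∏ m ∈ Finset.Icc 1 N, F m := by
    intro F
    rw [← Finset.filter_true_of_mem
      (fun i (_ : i ∈ (Finset.univ : Finset {k : ℕ // 1 ≤ k ∧ k ≤ N})) => i.2.1),
      hreidx (fun m => 1 ≤ m) F,
      Finset.filter_true_of_mem (fun m hm => (Finset.mem_Icc.1 hm).1)]
  have hgsum : ∀ (s : Finset ℕ) θ, ∏ m ∈ s, g (Y m θ) = Real.exp (∑ m ∈ s, -lam * Y m θ) := by
    intro s θ
    simp only [hg_def]
    exact (Real.exp_sum s _).symm
  have hintSN : Integrable (fun θ => g (S N θ)) Pr :=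
    hint _ M (hg_meas.comp (hSmeas N)) (hgS_bd.mono fun θ h => h N le_rfl)
  have hIccsplit : ∀ k, 1 ≤ k → k ≤ N →
      Finset.Icc 1 N = Finset.Icc 1 k ∪ Finset.Icc (k+1) N := by
    intro k h1 h2
    ext m
    simp only [Finset.mem_Icc, Finset.mem_union]
    omega
  have hIccdisj : ∀ k : ℕ, Disjoint (Finset.Icc 1 k) (Finset.Icc (k+1) N) := by
    intro k
    rw [Finset.disjoint_left]
    intro m hm hm'
    simp only [Finset.mem_Icc] at hm hm'
    omega
  have huniv := hprod Finset.univ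
  have h2univ : ∫ θ, (∏ i ∈ (Finset.univ : Finset {k : ℕ // 1 ≤ k ∧ k ≤ N}), g (Y i.1 θ)) ∂Pr
      = ∏ i ∈ (Finset.univ : Finset {k : ℕ // 1 ≤ k ∧ k ≤ N}), ρ i.1 := huniv
  have hISN : ∫ θ, g (S N θ) ∂Pr = P := by
    have h3 : (fun θ => g (S N θ))
        = fun θ => ∏ i ∈ (Finset.univ : Finset {k : ℕ // 1 ≤ k ∧ k ≤ N}), g (Y i.1 θ) := by
      funext θ
      calc g (S N θ) = Real.exp (∑ m ∈ Finset.Icc 1 N, -lam * Y m θ) := by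
            simp only [hg_def]
            rw [hS N θ, Finset.mul_sum]
        _ = ∏ m ∈ Finset.Icc 1 N, g (Y m θ) := (hgsum _ θ).symm
        _ = ∏ i ∈ (Finset.univ : Finset {k : ℕ // 1 ≤ k ∧ k ≤ N}), g (Y i.1 θ) :=
            (hreuniv (fun m => g (Y m θ))).symm
    calc ∫ θ, g (S N θ) ∂Pr
        = ∫ θ, (∏ i ∈ (Finset.univ : Finset {k : ℕ // 1 ≤ k ∧ k ≤ N}), g (Y i.1 θ)) ∂Pr :=
          congrArg (MeasureTheory.integral Pr) h3
      _ = ∏ i ∈ (Finset.univ : Finset {k : ℕ // 1 ≤ k ∧ k ≤ N}), ρ i.1 := h2univ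
      _ = ∏ m ∈ Finset.Icc 1 N, ρ m := hreuniv ρ
      _ = P := hP_def.symm
  -- key per-index estimate
  have hkey : ∀ k ∈ Finset.Icc a N, (Pr (E k)).toReal
      ≤ Real.exp (α * -c) / P * ∫ θ, Set.indicator (E k) 1 θ * g (S N θ) ∂Pr := by
    intro k hk
    obtain ⟨hk1, hk2⟩ := Finset.mem_Icc.1 hk
    have hk1N : 1 ≤ k := le_trans ha1 hk1
    set SS : Finset {k : ℕ // 1 ≤ k ∧ k ≤ N} :=
      Finset.univ.filter (fun i => i.1 ≤ k) with hSS_def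
    set TT : Finset {k : ℕ // 1 ≤ k ∧ k ≤ N} :=
      Finset.univ.filter (fun i => k < i.1) with hTT_def
    have hdisjST : Disjoint SS TT := by
      rw [Finset.disjoint_left]
      intro i hiS hiT
      rw [hSS_def, Finset.mem_filter] at hiS
      rw [hTT_def, Finset.mem_filter] at hiT
      omega
    set ps : ℕ → ({x // x ∈ SS} → ℝ) → ℝ := fun j v =>
      ∑ i ∈ Finset.univ.filter (fun i : {x // x ∈ SS} => i.1.1 ≤ j), v i with hps_def
    have hps_meas : ∀ j, Measurable (ps j) := fun j =>
      Finset.measurable_sum _ (fun i _ => measurable_pi_apply i)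
    have hpsW : ∀ j, j ≤ k → ∀ θ, ps j (fun i => Y i.1.1 θ) = S j θ := by
      intro j hj θ
      simp only [hps_def]
      rw [hS j θ]
      have himg2 : (Finset.univ.filter (fun i : {x // x ∈ SS} => i.1.1 ≤ j)).image
          (fun i => i.1.1) = Finset.Icc 1 j := by
        ext m
        simp only [Finset.mem_image, Finset.mem_filter, Finset.mem_univ, true_and,
          Finset.mem_Icc]
        constructor
        · rintro ⟨⟨⟨i, hi1, hi2⟩, hiS⟩, hij, rfl⟩
          exact ⟨hi1, hij⟩
        · rintro ⟨h1, h2⟩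
          refine ⟨⟨⟨m, h1, le_trans (le_trans h2 hj) hk2⟩, ?_⟩, h2, rfl⟩
          rw [hSS_def]
          simp only [Finset.mem_filter, Finset.mem_univ, true_and]
          exact le_trans h2 hj
      rw [← himg2, Finset.sum_image]
      intro x _ y _ hxy
      exact Subtype.ext (Subtype.ext hxy)
    set Cset : Set ({x // x ∈ SS} → ℝ) :=
      {v | ps k v ≤ 0} ∩ ⋂ j ∈ Finset.Ico a k, {v | 0 < ps j v} with hC_def
    have hCmeas : MeasurableSet Cset := by
      rw [hC_def]
      exact (measurableSet_le (hps_meas k) measurable_const).inter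
        (MeasurableSet.biInter (Set.to_countable _)
          (fun j _ => measurableSet_lt measurable_const (hps_meas j)))
    set b : ({x // x ∈ SS} → ℝ) → ℝ :=
      fun v => Set.indicator Cset (fun v => Real.exp (-lam * ps k v)) v with hb_def
    have hb_meas : Measurable b :=
      Measurable.indicator (Real.measurable_exp.comp ((hps_meas k).const_mul (-lam))) hCmeas
    have hCW : ∀ θ, ((fun i : {x // x ∈ SS} => Y i.1.1 θ) ∈ Cset) ↔ θ ∈ E k := by
      intro θ
      rw [hC_def, hEmem]
      simp only [Set.mem_inter_iff, Set.mem_setOf_eq, Set.mem_iInter]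
      constructor
      · rintro ⟨h1, h2⟩
        refine ⟨by rw [← hpsW k le_rfl θ]; exact h1, fun j hj => ?_⟩
        have h3 := h2 j hj
        rwa [hpsW j (le_of_lt (Finset.mem_Ico.1 hj).2) θ] at h3
      · rintro ⟨h1, h2⟩
        refine ⟨by rw [hpsW k le_rfl θ]; exact h1, fun j hj => ?_⟩
        rw [hpsW j (le_of_lt (Finset.mem_Ico.1 hj).2) θ]
        exact h2 j hj
    set B : Θ → ℝ := fun θ => Set.indicator (E k) 1 θ * g (S k θ) with hB_def
    have hBW : ∀ θ, b (fun i : {x // x ∈ SS} => Y i.1.1 θ) = B θ := by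
      intro θ
      simp only [hb_def, hB_def]
      by_cases hθ : θ ∈ E k
      · rw [Set.indicator_of_mem ((hCW θ).2 hθ), Set.indicator_of_mem hθ, hpsW k le_rfl θ]
        simp [hg_def]
      · rw [Set.indicator_of_notMem (fun hc => hθ ((hCW θ).1 hc)),
          Set.indicator_of_notMem hθ, zero_mul]
    set G : Θ → ℝ := fun θ => ∏ i ∈ TT, g (Y i.1 θ) with hG_def
    have hp_meas : Measurable (fun v : ({x // x ∈ TT} → ℝ) => ∏ i : {x // x ∈ TT}, g (v i)) :=
      Finset.measurable_prod _ fun i _ => hg_meas.comp (measurable_pi_apply i)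
    have hIF : IndepFun B G Pr := by
      have h := hindep SS TT hdisjST b _ hb_meas hp_meas
      have hL : (fun θ => b (fun i : {x // x ∈ SS} => Y i.1.1 θ)) = B := funext fun θ => hBW θ
      have hR : (fun θ => ∏ i : {x // x ∈ TT}, g (Y i.1.1 θ)) = G := by
        funext θ
        rw [hG_def]
        exact Finset.prod_coe_sort TT (fun i => g (Y i.1 θ))
      rw [hL, hR] at h
      exact h
    have hB_meas : Measurable B := by
      rw [hB_def]
      exact (measurable_const.indicator (hEmeas k)).mul (hg_meas.comp (hSmeas k))
    have hG_meas : Measurable G := by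
      rw [hG_def]
      exact Finset.measurable_prod _ fun i _ => hg_meas.comp (hmeas i.1)
    have hind_le_one : ∀ θ, |Set.indicator (E k) (1 : Θ → ℝ) θ| ≤ 1 := by
      intro θ
      by_cases hθ : θ ∈ E k <;> simp [hθ]
    have hBint : Integrable B Pr := by
      apply hint _ M hB_meas
      filter_upwards [hgS_bd] with θ hθ
      rw [hB_def, abs_mul]
      calc |Set.indicator (E k) 1 θ| * |g (S k θ)| ≤ 1 * M :=
            mul_le_mul (hind_le_one θ) (hθ k hk2) (abs_nonneg _) zero_le_one
        _ = M := one_mul M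
    have hBGint : Integrable (fun θ => Set.indicator (E k) 1 θ * g (S N θ)) Pr := by
      apply hint _ M ((measurable_const.indicator (hEmeas k)).mul (hg_meas.comp (hSmeas N)))
      filter_upwards [hgS_bd] with θ hθ
      show |Set.indicator (E k) 1 θ * g (S N θ)| ≤ M
      rw [abs_mul]
      calc |Set.indicator (E k) 1 θ| * |g (S N θ)| ≤ 1 * M :=
            mul_le_mul (hind_le_one θ) (hθ N le_rfl) (abs_nonneg _) zero_le_one
        _ = M := one_mul M
    have hIndint : Integrable (fun θ => Set.indicator (E k) (1 : Θ → ℝ) θ) Pr := by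
      apply hint _ 1 (measurable_const.indicator (hEmeas k))
      exact ae_of_all _ hind_le_one
    -- step 1 : Pr(E k) ≤ ∫ B
    have s1 : (Pr (E k)).toReal ≤ ∫ θ, B θ ∂Pr := by
      rw [← measureReal_def, ← integral_indicator_one (hEmeas k)]
      apply integral_mono hIndint hBint
      intro θ
      simp only [hB_def]
      by_cases hθ : θ ∈ E k
      · rw [Set.indicator_of_mem hθ]
        have hS0 : S k θ ≤ 0 := ((hEmem k θ).1 hθ).1
        have h1 : 1 ≤ g (S k θ) := by
          simp only [hg_def]
          apply Real.one_le_exp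
          nlinarith [hlam_pos.le]
        simpa using h1
      · simp [Set.indicator_of_notMem hθ]
    -- step 2 : split off the future
    have hfiltTT : (Finset.Icc 1 N).filter (fun m => k < m) = Finset.Icc (k+1) N := by
      ext m
      simp only [Finset.mem_filter, Finset.mem_Icc]
      omega
    have hGint_val : ∫ θ, G θ ∂Pr = ∏ m ∈ Finset.Icc (k+1) N, ρ m := by
      calc ∫ θ, G θ ∂Pr = ∏ i ∈ TT, ρ i.1 := by rw [hG_def]; exact hprod TT
        _ = ∏ m ∈ (Finset.Icc 1 N).filter (fun m => k < m), ρ m := by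
            rw [hTT_def]; exact hreidx (fun m => k < m) ρ
        _ = ∏ m ∈ Finset.Icc (k+1) N, ρ m := by rw [hfiltTT]
    have hBGeq : ∀ θ, B θ * G θ = Set.indicator (E k) 1 θ * g (S N θ) := by
      intro θ
      have e1 : G θ = ∏ m ∈ Finset.Icc (k+1) N, g (Y m θ) := by
        rw [hG_def, hTT_def]
        exact (hreidx (fun m => k < m) (fun m => g (Y m θ))).trans (by rw [hfiltTT])
      have e2 : g (S k θ) * ∏ m ∈ Finset.Icc (k+1) N, g (Y m θ) = g (S N θ) := by
        rw [hgsum (Finset.Icc (k+1) N) θ]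
        simp only [hg_def]
        rw [← Real.exp_add]
        congr 1
        rw [hS k θ, hS N θ, hIccsplit k hk1N hk2, Finset.sum_union (hIccdisj k),
          ← Finset.mul_sum, ← mul_add]
      calc B θ * G θ
          = (Set.indicator (E k) 1 θ * g (S k θ)) * ∏ m ∈ Finset.Icc (k+1) N, g (Y m θ) := by
            rw [hB_def, e1]
        _ = Set.indicator (E k) 1 θ * g (S N θ) := by rw [mul_assoc, e2]
    set I : ℝ := ∫ θ, Set.indicator (E k) 1 θ * g (S N θ) ∂Pr with hI_def
    have hI_nonneg : 0 ≤ I := by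
      rw [hI_def]
      apply integral_nonneg
      intro θ
      exact mul_nonneg (Set.indicator_nonneg (fun _ _ => zero_le_one) θ) (hg_pos _).le
    have hmulBG := hIF.integral_fun_mul_eq_mul_integral hB_meas.aestronglyMeasurable hG_meas.aestronglyMeasurable
    have hmul' : (∫ θ, B θ ∂Pr) * ∏ m ∈ Finset.Icc (k+1) N, ρ m = I := by
      rw [← hGint_val, ← hmulBG, hI_def]
      exact congrArg (MeasureTheory.integral Pr) (funext hBGeq)
    have hP2pos : 0 < ∏ m ∈ Finset.Icc (k+1) N, ρ m := by
      apply Finset.prod_pos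
      intro m hm
      apply hρ_pos
      simp only [Finset.mem_Icc] at hm ⊢
      omega
    have hP1pos : 0 < ∏ m ∈ Finset.Icc 1 k, ρ m := by
      apply Finset.prod_pos
      intro m hm
      apply hρ_pos
      simp only [Finset.mem_Icc] at hm ⊢
      omega
    have hintB_eq : ∫ θ, B θ ∂Pr = I / ∏ m ∈ Finset.Icc (k+1) N, ρ m := by
      rw [eq_div_iff (ne_of_gt hP2pos)]
      exact hmul'
    have hP1 : ∏ m ∈ Finset.Icc 1 k, ρ m ≤ Real.exp (α * -c) := by
      have hαk : α ≤ (k : ℝ) := le_trans hαa (Nat.cast_le.2 hk1)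
      calc ∏ m ∈ Finset.Icc 1 k, ρ m ≤ ∏ m ∈ Finset.Icc 1 k, r := by
            apply Finset.prod_le_prod
            · intro m hm
              apply le_of_lt
              apply hρ_pos
              simp only [Finset.mem_Icc] at hm ⊢
              omega
            · intro m hm
              apply hρ_le
              simp only [Finset.mem_Icc] at hm ⊢
              omega
        _ = r ^ k := by
            rw [Finset.prod_const, Nat.card_Icc]
            norm_num
        _ = Real.exp ((k : ℝ) * -c) := by
            rw [hr_def, ← Real.exp_nat_mul]
        _ ≤ Real.exp (α * -c) := by
            apply Real.exp_le_exp.2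
            nlinarith
    have hPsplit : P = (∏ m ∈ Finset.Icc 1 k, ρ m) * ∏ m ∈ Finset.Icc (k+1) N, ρ m := by
      rw [hP_def, hIccsplit k hk1N hk2, Finset.prod_union (hIccdisj k)]
    calc (Pr (E k)).toReal ≤ ∫ θ, B θ ∂Pr := s1
      _ = I / ∏ m ∈ Finset.Icc (k+1) N, ρ m := hintB_eq
      _ ≤ Real.exp (α * -c) / P * I := by
          rw [hPsplit, div_mul_eq_mul_div, div_le_div_iff₀ hP2pos (by positivity)]
          have hh := mul_le_mul_of_nonneg_right hP1 (mul_nonneg hI_nonneg hP2pos.le)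
          nlinarith [hh]
  -- summing up
  have hterm_int : ∀ k ∈ Finset.Icc a N,
      Integrable (fun θ => Set.indicator (E k) 1 θ * g (S N θ)) Pr := by
    intro k hk
    apply hint _ M ((measurable_const.indicator (hEmeas k)).mul (hg_meas.comp (hSmeas N)))
    filter_upwards [hgS_bd] with θ hθ
    show |Set.indicator (E k) 1 θ * g (S N θ)| ≤ M
    rw [abs_mul]
    have hind_le_one : |Set.indicator (E k) (1 : Θ → ℝ) θ| ≤ 1 := by
      by_cases hθ' : θ ∈ E k <;> simp [hθ']
    calc |Set.indicator (E k) 1 θ| * |g (S N θ)| ≤ 1 * M :=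
          mul_le_mul hind_le_one (hθ N le_rfl) (abs_nonneg _) zero_le_one
      _ = M := one_mul M
  have hsumI : ∑ k ∈ Finset.Icc a N,
      (∫ θ, Set.indicator (E k) 1 θ * g (S N θ) ∂Pr) ≤ P := by
    rw [← integral_finset_sum _ hterm_int, ← hISN]
    apply integral_mono (integrable_finset_sum _ hterm_int) hintSN
    intro θ
    have hsum_ind : ∑ k ∈ Finset.Icc a N, Set.indicator (E k) (1 : Θ → ℝ) θ ≤ 1 := by
      by_cases hex : ∃ k0 ∈ Finset.Icc a N, θ ∈ E k0
      · obtain ⟨k0, hk0, hθ0⟩ := hex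
        rw [Finset.sum_eq_single_of_mem k0 hk0
          (fun k hk hne => Set.indicator_of_notMem (hEdisj θ k0 hk0 k hk (Ne.symm hne) hθ0) _)]
        rw [Set.indicator_of_mem hθ0]
        simp
      · push_neg at hex
        rw [Finset.sum_eq_zero (fun k hk => Set.indicator_of_notMem (hex k hk) _)]
        norm_num
    calc ∑ k ∈ Finset.Icc a N, Set.indicator (E k) 1 θ * g (S N θ)
        = (∑ k ∈ Finset.Icc a N, Set.indicator (E k) 1 θ) * g (S N θ) :=
          (Finset.sum_mul _ _ _).symm
      _ ≤ 1 * g (S N θ) := mul_le_mul_of_nonneg_right hsum_ind (hg_pos _).le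
      _ = g (S N θ) := one_mul _
  -- final assembly
  have hpd : Set.PairwiseDisjoint ↑(Finset.Icc a N) E := by
    intro k hk k' hk' hne
    rw [Finset.mem_coe] at hk hk'
    exact Set.disjoint_left.2 fun θ h h' => hEdisj θ k hk k' hk' hne h h'
  rw [hset, measure_biUnion_finset hpd (fun k _ => hEmeas k)]
  calc ∑ k ∈ Finset.Icc a N, Pr (E k)
      = ENNReal.ofReal (∑ k ∈ Finset.Icc a N, (Pr (E k)).toReal) := by
        rw [ENNReal.ofReal_sum_of_nonneg (fun _ _ => ENNReal.toReal_nonneg)]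
        exact Finset.sum_congr rfl fun k _ => (ENNReal.ofReal_toReal (measure_ne_top Pr _)).symm
    _ ≤ ENNReal.ofReal ((16 / 3) * Real.exp (-α * K ^ 2 / (2 * A ^ 2))) := by
        apply ENNReal.ofReal_le_ofReal
        have hexp_eq : Real.exp (α * -c) = Real.exp (-α * K ^ 2 / (2 * A ^ 2)) := by
          rw [hc_def]
          congr 1
          ring
        calc ∑ k ∈ Finset.Icc a N, (Pr (E k)).toReal
            ≤ ∑ k ∈ Finset.Icc a N, Real.exp (α * -c) / P
                * ∫ θ, Set.indicator (E k) 1 θ * g (S N θ) ∂Pr := Finset.sum_le_sum hkey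
          _ = Real.exp (α * -c) / P * ∑ k ∈ Finset.Icc a N,
                ∫ θ, Set.indicator (E k) 1 θ * g (S N θ) ∂Pr := by rw [Finset.mul_sum]
          _ ≤ Real.exp (α * -c) / P * P := by
              apply mul_le_mul_of_nonneg_left hsumI
              exact le_of_lt (div_pos (Real.exp_pos _) hP_pos)
          _ = Real.exp (α * -c) := div_mul_cancel₀ _ (ne_of_gt hP_pos)
          _ ≤ (16 / 3) * Real.exp (-α * K ^ 2 / (2 * A ^ 2)) := by
              rw [hexp_eq]
              nlinarith [Real.exp_pos (-α * K ^ 2 / (2 * A ^ 2))]
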